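/- For every automorphism φ of the line combinatorics 𝒞 there exists a unique permutation σ ∈ S₅ such that φ(L_i) = L_{σ(i)} and φ(M_i) = M_{σ(i)} for all i = 1,…,5. Moreover, the resulting map Aut(𝒞) → S₅, φ ↦ σ, is an injective group homomorphism. -/
import Mathlib


/-! The line combinatorics `𝒞`. Lines are indexed by `Fin 5 ⊕ Fin 5`, where
`Sum.inl i` is the line `L_{i+1}` and `Sum.inr i` is the line `M_{i+1}`
(`0`-based indices for the paper's `1`-based labels). -/

/-- The ten lines of the combinatorics `𝒞`: `Sum.inl i = L_{i+1}`, `Sum.inr i = M_{i+1}`. -/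
abbrev LineC := Fin 5 ⊕ Fin 5

/-- The table `T` of concurrent triples `{M_i, L_j, L_k}` (0-based indices): it encodes
`(1,{2,5}), (1,{3,4}), (2,{1,3}), (2,{4,5}), (3,{1,5}), (3,{2,4}), (4,{1,2}),
(4,{3,5}), (5,{1,4}), (5,{2,3})` in the paper's 1-based labels. -/
def TTable : List (Fin 5 × Fin 5 × Fin 5) :=
  [(0,1,4), (0,2,3), (1,0,2), (1,3,4), (2,0,4), (2,1,3), (3,0,1), (3,2,4), (4,0,3), (4,1,2)]

/-- `Conc a b c` holds iff `a`, `b`, `c` are three distinct lines of `𝒞` which are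
concurrent: either all three are of type `M` (all of `M₁,…,M₅` pass through the common
point `O`), or `{a,b,c} = {M_i, L_j, L_k}` for a triple `(i,{j,k})` in the table `T`. -/
def Conc (a b c : LineC) : Prop :=
  a ≠ b ∧ a ≠ c ∧ b ≠ c ∧
    ((∃ i j k, a = Sum.inr i ∧ b = Sum.inr j ∧ c = Sum.inr k) ∨
     (∃ i j k, (i, j, k) ∈ TTable ∧
        ({a, b, c} : Finset LineC) = {Sum.inr i, Sum.inl j, Sum.inl k}))

/-- An automorphism of the line combinatorics `𝒞` is a bijection of the ten lines such
that any three lines are concurrent iff their images are concurrent. -/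
def IsAut (φ : Equiv.Perm LineC) : Prop :=
  ∀ a b c, Conc a b c ↔ Conc (φ a) (φ b) (φ c)

/-- Equality of two explicit three-element finsets, as a propositional formula. -/
lemma tripleq {α : Type*} [DecidableEq α] (a b c d e f : α) :
    ({a,b,c} : Finset α) = {d,e,f} ↔
      (((a = d ∨ a = e ∨ a = f) ∧ (b = d ∨ b = e ∨ b = f) ∧ (c = d ∨ c = e ∨ c = f)) ∧
       ((d = a ∨ d = b ∨ d = c) ∧ (e = a ∨ e = b ∨ e = c) ∧ (f = a ∨ f = b ∨ f = c))) := by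
  rw [Finset.Subset.antisymm_iff]
  simp only [Finset.insert_subset_iff, Finset.singleton_subset_iff, Finset.mem_insert,
    Finset.mem_singleton]

/-- `{a,b,c} = {M_{t.1}, L_{t.2.1}, L_{t.2.2}}`, written without finsets. -/
def tripP (a b c : LineC) (t : Fin 5 × Fin 5 × Fin 5) : Prop :=
  ((a = Sum.inr t.1 ∨ a = Sum.inl t.2.1 ∨ a = Sum.inl t.2.2) ∧
   (b = Sum.inr t.1 ∨ b = Sum.inl t.2.1 ∨ b = Sum.inl t.2.2) ∧
   (c = Sum.inr t.1 ∨ c = Sum.inl t.2.1 ∨ c = Sum.inl t.2.2)) ∧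
  ((Sum.inr t.1 = a ∨ Sum.inr t.1 = b ∨ Sum.inr t.1 = c) ∧
   (Sum.inl t.2.1 = a ∨ Sum.inl t.2.1 = b ∨ Sum.inl t.2.1 = c) ∧
   (Sum.inl t.2.2 = a ∨ Sum.inl t.2.2 = b ∨ Sum.inl t.2.2 = c))

instance (a b c : LineC) (t : Fin 5 × Fin 5 × Fin 5) : Decidable (tripP a b c t) := by
  unfold tripP; infer_instance

/-- A fast, efficiently decidable reformulation of `Conc`. -/
def Conc' (a b c : LineC) : Prop :=
  a ≠ b ∧ a ≠ c ∧ b ≠ c ∧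
    ((a.isRight ∧ b.isRight ∧ c.isRight) ∨ (∃ t ∈ TTable, tripP a b c t))

instance (a b c : LineC) : Decidable (Conc' a b c) := by unfold Conc'; infer_instance

lemma conc_iff (a b c : LineC) : Conc a b c ↔ Conc' a b c := by
  unfold Conc Conc'
  refine and_congr Iff.rfl (and_congr Iff.rfl (and_congr Iff.rfl (or_congr ?_ ?_)))
  · constructor
    · rintro ⟨i, j, k, rfl, rfl, rfl⟩; exact ⟨rfl, rfl, rfl⟩
    · rintro ⟨ha, hb, hc⟩
      obtain ⟨i, rfl⟩ := Sum.isRight_iff.mp ha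
      obtain ⟨j, rfl⟩ := Sum.isRight_iff.mp hb
      obtain ⟨k, rfl⟩ := Sum.isRight_iff.mp hc
      exact ⟨i, j, k, rfl, rfl, rfl⟩
  · constructor
    · rintro ⟨i, j, k, hm, hs⟩
      exact ⟨(i, j, k), hm, (tripleq a b c _ _ _).mp hs⟩
    · rintro ⟨⟨i, j, k⟩, hm, hs⟩
      exact ⟨i, j, k, hm, (tripleq a b c _ _ _).mpr hs⟩

instance (a b c : LineC) : Decidable (Conc a b c) :=
  decidable_of_iff (Conc' a b c) (conc_iff a b c).symm

/-- `Q a` holds iff `a` belongs to a 4-element set of lines all of whose triples are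
concurrent; this characterizes the `M`-lines. -/
def Q (a : LineC) : Prop := ∃ b c d, Conc a b c ∧ Conc a b d ∧ Conc a c d ∧ Conc b c d

instance (a : LineC) : Decidable (Q a) := by unfold Q; infer_instance

set_option maxHeartbeats 4000000 in
lemma charM : ∀ a : LineC, Q a ↔ ∃ i, a = Sum.inr i := by decide

set_option maxHeartbeats 1000000 in
lemma pairChar : ∀ i j : Fin 5,
    (∃ k, Conc (Sum.inr i) (Sum.inl j) (Sum.inl k)) ↔ i ≠ j := by decide

/-- For every automorphism `φ` of `𝒞` there is a unique permutation `σ ∈ S₅` with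
`φ(L_i) = L_{σ(i)}` and `φ(M_i) = M_{σ(i)}` for all `i`; moreover `φ ↦ σ` is a group
homomorphism (composition goes to composition) and it is injective. -/
theorem stmt_3 :
    (∀ φ : Equiv.Perm LineC, IsAut φ →
      ∃! σ : Equiv.Perm (Fin 5),
        (∀ i, φ (Sum.inl i) = Sum.inl (σ i)) ∧ (∀ i, φ (Sum.inr i) = Sum.inr (σ i))) ∧
    (∀ φ ψ : Equiv.Perm LineC, ∀ σ τ : Equiv.Perm (Fin 5),
      IsAut φ → IsAut ψ →
      (∀ i, φ (Sum.inl i) = Sum.inl (σ i)) → (∀ i, φ (Sum.inr i) = Sum.inr (σ i)) →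
      (∀ i, ψ (Sum.inl i) = Sum.inl (τ i)) → (∀ i, ψ (Sum.inr i) = Sum.inr (τ i)) →
      (∀ i, (φ.trans ψ) (Sum.inl i) = Sum.inl ((τ * σ) i)) ∧
      (∀ i, (φ.trans ψ) (Sum.inr i) = Sum.inr ((τ * σ) i))) ∧
    (∀ φ ψ : Equiv.Perm LineC, ∀ σ : Equiv.Perm (Fin 5),
      IsAut φ → IsAut ψ →
      (∀ i, φ (Sum.inl i) = Sum.inl (σ i)) → (∀ i, φ (Sum.inr i) = Sum.inr (σ i)) →
      (∀ i, ψ (Sum.inl i) = Sum.inl (σ i)) → (∀ i, ψ (Sum.inr i) = Sum.inr (σ i)) →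
      φ = ψ) := by
  refine ⟨?_, ?_, ?_⟩
  · intro φ hφ
    have Qmap : ∀ a, Q a → Q (φ a) := by
      rintro a ⟨b, c, d, h1, h2, h3, h4⟩
      exact ⟨φ b, φ c, φ d, (hφ _ _ _).mp h1, (hφ _ _ _).mp h2,
        (hφ _ _ _).mp h3, (hφ _ _ _).mp h4⟩
    have Qmap' : ∀ a, Q (φ a) → Q a := by
      rintro a ⟨b, c, d, h1, h2, h3, h4⟩
      exact ⟨φ.symm b, φ.symm c, φ.symm d,
        (hφ _ _ _).mpr (by simpa using h1), (hφ _ _ _).mpr (by simpa using h2),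
        (hφ _ _ _).mpr (by simpa using h3), (hφ _ _ _).mpr (by simpa using h4)⟩
    have hMr : ∀ i, ∃ j, φ (Sum.inr i) = Sum.inr j := by
      intro i
      exact (charM _).mp (Qmap _ ((charM _).mpr ⟨i, rfl⟩))
    have hMl : ∀ j, ∃ k, φ (Sum.inl j) = Sum.inl k := by
      intro j
      cases h : φ (Sum.inl j) with
      | inl k => exact ⟨k, rfl⟩
      | inr x =>
        have hq : Q (Sum.inl j) := Qmap' _ (by rw [h]; exact (charM _).mpr ⟨x, rfl⟩)
        obtain ⟨i, hi⟩ := (charM _).mp hq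
        exact absurd hi (by simp)
    choose m hm using hMr
    choose l hl using hMl
    have minj : Function.Injective m := by
      intro i i' h
      have : φ (Sum.inr i) = φ (Sum.inr i') := by rw [hm i, hm i', h]
      exact Sum.inr_injective (φ.injective this)
    have linj : Function.Injective l := by
      intro i i' h
      have : φ (Sum.inl i) = φ (Sum.inl i') := by rw [hl i, hl i', h]
      exact Sum.inl_injective (φ.injective this)
    have mbij := Finite.injective_iff_bijective.mp minj
    have lbij := Finite.injective_iff_bijective.mp linj
    have hml : ∀ i, m i = l i := by
      intro i
      by_contra hne
      obtain ⟨k', hk'⟩ := (pairChar (m i) (l i)).mpr hne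
      obtain ⟨k, hk⟩ := lbij.2 k'
      have h1 : Conc (φ (Sum.inr i)) (φ (Sum.inl i)) (φ (Sum.inl k)) := by
        rw [hm, hl, hl, hk]; exact hk'
      exact (pairChar i i).mp ⟨k, (hφ _ _ _).mpr h1⟩ rfl
    refine ⟨Equiv.ofBijective m mbij, ⟨?_, ?_⟩, ?_⟩
    · intro i
      show φ (Sum.inl i) = Sum.inl (m i)
      rw [hl i, hml i]
    · intro i
      exact hm i
    · rintro τ ⟨hτ1, _⟩
      apply Equiv.ext
      intro i
      show τ i = m i
      have h2 : φ (Sum.inl i) = Sum.inl (m i) := by rw [hl i, hml i]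
      exact Sum.inl_injective ((hτ1 i).symm.trans h2)
  · intro φ ψ σ τ _ _ h1 h2 h3 h4
    constructor <;> intro i <;>
      simp [Equiv.trans_apply, h1, h2, h3, h4, Equiv.Perm.mul_apply]
  · intro φ ψ σ _ _ hφ1 hφ2 hψ1 hψ2
    ext x
    cases x with
    | inl i => rw [hφ1 i, hψ1 i]
    | inr i => rw [hφ2 i, hψ2 i]
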